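/- arXiv:1612.03970 — 2 statements merged into one kernel-verified Lean document; each statement's English description precedes it below -/
import Mathlib

section
/- Let φ : 𝔻 → 𝔻 be a holomorphic self-map of the open unit disk with φ(0) = 0. Then for every z ∈ 𝔻 with z ≠ 0 and φ(z) ≠ 0, one has |φ'(z)| · log|z| / log|φ(z)| ≤ 1. -/
open scoped InnerProductSpace
open Filter ContinuousLinearMap

/-- The `n`-th approximation number (singular value) of a bounded operator:
`sₙ(T) = inf {‖T - F‖ : rank F < n}`. -/
noncomputable def approxNum {H K : Type*} [NormedAddCommGroup H] [NormedSpace ℂ H]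
    [NormedAddCommGroup K] [NormedSpace ℂ K] (T : H →L[ℂ] K) (n : ℕ) : ℝ :=
  sInf {c : ℝ | ∃ F : H →L[ℂ] K, FiniteDimensional ℂ (LinearMap.range F.toLinearMap) ∧
    Module.finrank ℂ (LinearMap.range F.toLinearMap) < n ∧ c = ‖T - F‖}

/-- The essential norm of a bounded operator: `inf {‖T - L‖ : L compact}`. -/
noncomputable def essNorm {H K : Type*} [NormedAddCommGroup H] [NormedSpace ℂ H]
    [NormedAddCommGroup K] [NormedSpace ℂ K] (T : H →L[ℂ] K) : ℝ :=
  sInf {c : ℝ | ∃ L : H →L[ℂ] K, IsCompactOperator L ∧ c = ‖T - L‖}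



open Metric Complex

/-- Möbius transform of the disk. -/
noncomputable def mob (c w : ℂ) : ℂ := (w - c) / (1 - (starRingEnd ℂ c) * w)

lemma mob_denom_ne {c w : ℂ} (hc : ‖c‖ < 1) (hw : ‖w‖ < 1) :
    1 - (starRingEnd ℂ c) * w ≠ 0 := by
  intro h
  have h1 : (starRingEnd ℂ c) * w = 1 := by linear_combination -h
  have := congrArg norm h1
  rw [norm_mul, norm_one, Complex.norm_conj] at this
  nlinarith [norm_nonneg c, norm_nonneg w]

lemma mob_mapsTo {c w : ℂ} (hc : ‖c‖ < 1) (hw : ‖w‖ < 1) :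
    ‖mob c w‖ < 1 := by
  have hden := mob_denom_ne hc hw
  have key : Complex.normSq (1 - (starRingEnd ℂ c) * w) - Complex.normSq (w - c)
      = (1 - Complex.normSq c) * (1 - Complex.normSq w) := by
    have h1 := Complex.mul_conj (1 - (starRingEnd ℂ c) * w)
    have h2 := Complex.mul_conj (w - c)
    have h3 := Complex.mul_conj c
    have h4 := Complex.mul_conj w
    have : ((Complex.normSq (1 - (starRingEnd ℂ c) * w) : ℂ)) - Complex.normSq (w - c)
        = (1 - (Complex.normSq c : ℂ)) * (1 - Complex.normSq w) := by
      rw [← h1, ← h2, ← h3, ← h4]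
      simp only [map_sub, map_mul, map_one, Complex.conj_conj]
      ring
    exact_mod_cast this
  have hc2 : Complex.normSq c < 1 := by
    rw [← Complex.sq_norm] at *; nlinarith [norm_nonneg c]
  have hw2 : Complex.normSq w < 1 := by
    rw [← Complex.sq_norm] at *; nlinarith [norm_nonneg w]
  have hlt : Complex.normSq (w - c) < Complex.normSq (1 - (starRingEnd ℂ c) * w) := by
    nlinarith
  rw [mob, norm_div, div_lt_one (norm_pos_iff.2 hden)]
  exact lt_of_pow_lt_pow_left₀ 2 (norm_nonneg _) (by
    rw [Complex.sq_norm, Complex.sq_norm]; exact hlt)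

lemma mob_deriv {c w : ℂ} (h : 1 - (starRingEnd ℂ c) * w ≠ 0) :
    HasDerivAt (mob c) ((1 - Complex.normSq c) / (1 - (starRingEnd ℂ c) * w)^2) w := by
  have h1 : HasDerivAt (fun w : ℂ => w - c) 1 w := (hasDerivAt_id w).sub_const c
  have h2 : HasDerivAt (fun w : ℂ => 1 - (starRingEnd ℂ c) * w) (-(starRingEnd ℂ c)) w := by
    simpa using ((hasDerivAt_id w).const_mul (starRingEnd ℂ c)).const_sub 1
  have := h1.div h2 h
  refine this.congr_deriv ?_
  have : (starRingEnd ℂ c) * c = (Complex.normSq c : ℂ) := by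
    rw [mul_comm]; exact Complex.mul_conj c
  rw [div_left_inj' (pow_ne_zero 2 h)]
  linear_combination -this

lemma log_div_mono {x y : ℝ} (hx : 0 < x) (hxy : x ≤ y) (hy : y < 1) :
    Real.log x / (1 - x^2) ≤ Real.log y / (1 - y^2) := by
  have key : MonotoneOn (fun t : ℝ => Real.log t / (1 - t^2)) (Set.Ioo 0 1) := by
    have hderiv : ∀ t ∈ Set.Ioo (0:ℝ) 1, HasDerivAt (fun t : ℝ => Real.log t / (1 - t^2))
        ((t⁻¹ * (1 - t^2) - Real.log t * (-(2*t))) / (1 - t^2)^2) t := by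
      intro t ht
      have ht2 : 1 - t^2 ≠ 0 := by nlinarith [ht.1, ht.2]
      have h1 : HasDerivAt Real.log t⁻¹ t := Real.hasDerivAt_log (ne_of_gt ht.1)
      have h2 : HasDerivAt (fun t : ℝ => 1 - t^2) (-(2*t)) t := by
        simpa using (hasDerivAt_pow 2 t).const_sub 1
      exact h1.div h2 ht2
    apply monotoneOn_of_deriv_nonneg (convex_Ioo 0 1)
    · intro t ht
      exact (hderiv t ht).continuousAt.continuousWithinAt
    · intro t ht
      rw [interior_Ioo] at ht
      exact (hderiv t ht).differentiableAt.differentiableWithinAt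
    · intro t ht
      rw [interior_Ioo] at ht
      rw [(hderiv t ht).deriv]
      have ht1 := ht.1
      have ht2 := ht.2
      have h2 : (0:ℝ) < 1 - t^2 := by nlinarith
      have hlog : Real.log (1/t^2) ≤ 1/t^2 - 1 :=
        Real.log_le_sub_one_of_pos (by positivity)
      rw [Real.log_div one_ne_zero (by positivity), Real.log_one,
        Real.log_pow] at hlog
      have hnum : 0 ≤ t⁻¹ * (1 - t^2) - Real.log t * (-(2*t)) := by
        have h3 : 1 - t^2 + 2 * t^2 * Real.log t ≥ 0 := by
          have := mul_le_mul_of_nonneg_left hlog (le_of_lt (by positivity : (0:ℝ) < t^2))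
          have ht2' : t^2 * (1/t^2) = 1 := by field_simp
          nlinarith
        have : t⁻¹ * (1 - t^2) - Real.log t * (-(2*t)) = (1 - t^2 + 2*t^2*Real.log t) / t := by
          field_simp; ring
        rw [this]
        positivity
      positivity
  exact key ⟨hx, lt_of_le_of_lt hxy hy⟩ ⟨lt_of_lt_of_le hx hxy, hy⟩ hxy

/-- For a holomorphic self-map `φ` of the unit disk with `φ(0) = 0`, one has
`|φ'(z)| · log|z| / log|φ(z)| ≤ 1` whenever `z ≠ 0` and `φ(z) ≠ 0`. -/
theorem stmt1 (φ : ℂ → ℂ) (hd : DifferentiableOn ℂ φ (Metric.ball 0 1))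
    (hm : Set.MapsTo φ (Metric.ball 0 1) (Metric.ball 0 1)) (h0 : φ 0 = 0)
    (z : ℂ) (hz : z ∈ Metric.ball (0 : ℂ) 1) (hz0 : z ≠ 0) (hφz : φ z ≠ 0) :
    ‖deriv φ z‖ * Real.log ‖z‖ / Real.log ‖φ z‖ ≤ 1 := by
  have hza : ‖z‖ < 1 := by simpa [Complex.dist_eq] using hz
  have hφzb : φ z ∈ Metric.ball (0:ℂ) 1 := hm hz
  have hφza : ‖φ z‖ < 1 := by simpa [Complex.dist_eq] using hφzb
  have hnega : ‖-z‖ < 1 := by simpa using hza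
  -- the composed map g = mob (φ z) ∘ φ ∘ mob (-z)
  set g : ℂ → ℂ := fun w => mob (φ z) (φ (mob (-z) w)) with hg
  have hmob0 : mob (-z) 0 = z := by simp [mob]
  have hmobb : mob (φ z) (φ z) = 0 := by simp [mob]
  -- g maps the ball to itself
  have hgm : Set.MapsTo g (Metric.ball 0 1) (Metric.ball 0 1) := by
    intro w hw
    have hwa : ‖w‖ < 1 := by simpa [Complex.dist_eq] using hw
    have h1 : ‖mob (-z) w‖ < 1 := mob_mapsTo hnega hwa
    have h2 : ‖φ (mob (-z) w)‖ < 1 := by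
      have := hm (by simpa [Complex.dist_eq, mem_ball_zero_iff] using h1 : mob (-z) w ∈ Metric.ball (0:ℂ) 1)
      simpa [Complex.dist_eq] using this
    have h3 := mob_mapsTo hφza h2
    simpa [Complex.dist_eq, mem_ball_zero_iff] using h3
  -- g is differentiable on the ball
  have hgd : DifferentiableOn ℂ g (Metric.ball 0 1) := by
    intro w hw
    have hwa : ‖w‖ < 1 := by simpa [Complex.dist_eq] using hw
    have h1 : ‖mob (-z) w‖ < 1 := mob_mapsTo hnega hwa
    have hm1 : mob (-z) w ∈ Metric.ball (0:ℂ) 1 := by simpa [mem_ball_zero_iff] using h1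
    have h2 : ‖φ (mob (-z) w)‖ < 1 := by
      have := hm hm1; simpa [Complex.dist_eq] using this
    have d1 : DifferentiableAt ℂ (mob (-z)) w := (mob_deriv (mob_denom_ne hnega hwa)).differentiableAt
    have d2 : DifferentiableAt ℂ φ (mob (-z) w) :=
      hd.differentiableAt (Metric.isOpen_ball.mem_nhds hm1)
    have d3 : DifferentiableAt ℂ (mob (φ z)) (φ (mob (-z) w)) :=
      (mob_deriv (mob_denom_ne hφza h2)).differentiableAt
    exact ((d3.comp _ d2).comp _ d1).differentiableWithinAt
  have hg0 : g 0 = 0 := by rw [hg]; simp [hmob0, hmobb]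
  -- derivative of g at 0
  have h1 : HasDerivAt (mob (-z)) ((1 - Complex.normSq (-z)) / (1 - (starRingEnd ℂ (-z)) * 0)^2) 0 :=
    mob_deriv (by simp)
  have h2 : HasDerivAt φ (deriv φ z) (mob (-z) 0) := by
    rw [hmob0]
    exact (hd.differentiableAt (Metric.isOpen_ball.mem_nhds hz)).hasDerivAt
  have hden : (1:ℂ) - (starRingEnd ℂ (φ z)) * (φ z) ≠ 0 :=
    mob_denom_ne hφza hφza
  have h3 : HasDerivAt (mob (φ z))
      ((1 - Complex.normSq (φ z)) / (1 - (starRingEnd ℂ (φ z)) * (φ (mob (-z) 0)))^2)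
      (φ (mob (-z) 0)) := by
    rw [hmob0]
    exact mob_deriv hden
  have hcomp : HasDerivAt g
      (((1 - Complex.normSq (φ z)) / (1 - (starRingEnd ℂ (φ z)) * (φ (mob (-z) 0)))^2 * deriv φ z) *
        ((1 - Complex.normSq (-z)) / (1 - (starRingEnd ℂ (-z)) * 0)^2)) 0 :=
    (h3.comp _ h2).comp _ h1
  have hg1 := Complex.norm_deriv_le_one_of_mapsTo_ball hgd (by rw [hg0]; exact hgm.mono_right ball_subset_closedBall) one_pos
  rw [hcomp.deriv] at hg1
  -- simplify the derivative value
  have hB : Complex.normSq (φ z) < 1 := by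
    rw [← Complex.sq_norm]; nlinarith [norm_nonneg (φ z)]
  have hA : Complex.normSq z < 1 := by
    rw [← Complex.sq_norm]; nlinarith [norm_nonneg z]
  have hconjb : (starRingEnd ℂ (φ z)) * (φ z) = (Complex.normSq (φ z) : ℂ) := by
    rw [mul_comm]; exact Complex.mul_conj (φ z)
  have hval : ((1 - Complex.normSq (φ z) : ℂ) / (1 - (starRingEnd ℂ (φ z)) * (φ (mob (-z) 0)))^2 * deriv φ z) *
        ((1 - Complex.normSq (-z)) / (1 - (starRingEnd ℂ (-z)) * 0)^2)
      = deriv φ z * (((1 - Complex.normSq z : ℝ) : ℂ) / ((1 - Complex.normSq (φ z) : ℝ) : ℂ)) := by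
    rw [hmob0, Complex.normSq_neg]
    rw [hconjb]
    have hBne : ((1:ℂ) - (Complex.normSq (φ z) : ℂ)) ≠ 0 := by rwa [hconjb] at hden
    push_cast
    field_simp
    ring
  rw [hval] at hg1
  rw [norm_mul, norm_div, Complex.norm_real, Complex.norm_real, Real.norm_eq_abs, Real.norm_eq_abs,
    abs_of_pos (by linarith), abs_of_pos (by linarith)] at hg1
  -- now the real-variable endgame
  set K := ‖deriv φ z‖ with hK
  set A := ‖z‖ with hA'
  set B := ‖φ z‖ with hB'
  have hA0 : 0 < A := norm_pos_iff.2 hz0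
  have hB0 : 0 < B := norm_pos_iff.2 hφz
  have hBA : B ≤ A := Complex.norm_le_norm_of_mapsTo_ball hd (hm.mono_right ball_subset_closedBall) h0 hza
  have hsqA : Complex.normSq z = A^2 := (Complex.sq_norm z).symm
  have hsqB : Complex.normSq (φ z) = B^2 := (Complex.sq_norm (φ z)).symm
  rw [hsqA, hsqB] at hg1
  have hA2 : (0:ℝ) < 1 - A^2 := by nlinarith
  have hB2 : (0:ℝ) < 1 - B^2 := by nlinarith
  have hpick : K * (1 - A^2) ≤ 1 - B^2 := by
    rw [← mul_div_assoc, div_le_one hB2] at hg1; linarith [hg1]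
  have hmono : Real.log B / (1 - B^2) ≤ Real.log A / (1 - A^2) :=
    log_div_mono hB0 hBA hza
  have hcross : Real.log B * (1 - A^2) ≤ Real.log A * (1 - B^2) :=
    (div_le_div_iff₀ hB2 hA2).1 hmono
  have hlogA : Real.log A < 0 := Real.log_neg hA0 hza
  have hlogB : Real.log B < 0 := Real.log_neg hB0 (by linarith)
  have hK0 : 0 ≤ K := norm_nonneg _
  rw [show K * Real.log A / Real.log B = (-(K * Real.log A)) / (-Real.log B) by
    rw [neg_div_neg_eq], div_le_one (by linarith)]
  nlinarith [mul_le_mul_of_nonneg_left hpick (neg_nonneg.2 hlogA.le)]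
end

section
/- Let T ≥ 0 be a bounded positive operator on a Hilbert space with ‖T‖ₑ = 1 and ∏ₙ max(1, sₙ(T)) < ∞. Let P be the spectral projection of T for the interval (1, ∞). Then T = (T·(1-P) + P) + (T - 1)P, where T(1-P) + P is a contraction and (T-1)P is trace class. -/
open scoped InnerProductSpace
open Filter ContinuousLinearMap

/-- An operator between Hilbert spaces is trace class iff its approximation numbers
`s₁(X), s₂(X), …` are summable. -/
def IsTraceClassOp {H K : Type*} [NormedAddCommGroup H] [NormedSpace ℂ H]
    [NormedAddCommGroup K] [NormedSpace ℂ K] (X : H →L[ℂ] K) : Prop :=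
  Summable fun n : ℕ => approxNum X (n + 1)

section AuxStmt5
set_option linter.unusedSectionVars false

variable {H : Type*} [NormedAddCommGroup H] [InnerProductSpace ℂ H] [CompleteSpace H]

lemma aux_set_bddBelow (T : H →L[ℂ] H) (n : ℕ) :
    BddBelow {c : ℝ | ∃ F : H →L[ℂ] H, FiniteDimensional ℂ (LinearMap.range F.toLinearMap) ∧
      Module.finrank ℂ (LinearMap.range F.toLinearMap) < n ∧ c = ‖T - F‖} :=
  ⟨0, by rintro c ⟨F, _, _, rfl⟩; exact norm_nonneg _⟩

lemma aux_zero_mem (T : H →L[ℂ] H) {n : ℕ} (hn : 0 < n) :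
    ‖T‖ ∈ {c : ℝ | ∃ F : H →L[ℂ] H, FiniteDimensional ℂ (LinearMap.range F.toLinearMap) ∧
      Module.finrank ℂ (LinearMap.range F.toLinearMap) < n ∧ c = ‖T - F‖} := by
  refine ⟨0, ?_, ?_, by simp⟩
  · have h : LinearMap.range (0 : H →L[ℂ] H).toLinearMap = ⊥ := by
      simp [ContinuousLinearMap.coe_zero]
    rw [h]; infer_instance
  · have h : LinearMap.range (0 : H →L[ℂ] H).toLinearMap = ⊥ := by
      simp [ContinuousLinearMap.coe_zero]
    rw [h]; simpa using hn

lemma aux_set_nonempty (T : H →L[ℂ] H) {n : ℕ} (hn : 0 < n) :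
    Set.Nonempty {c : ℝ | ∃ F : H →L[ℂ] H, FiniteDimensional ℂ (LinearMap.range F.toLinearMap) ∧
      Module.finrank ℂ (LinearMap.range F.toLinearMap) < n ∧ c = ‖T - F‖} :=
  ⟨‖T‖, aux_zero_mem T hn⟩

lemma approxNum_nonneg (T : H →L[ℂ] H) (n : ℕ) : 0 ≤ approxNum T n :=
  Real.sInf_nonneg (by rintro c ⟨F, _, _, rfl⟩; exact norm_nonneg _)

lemma approxNum_le (T G : H →L[ℂ] H) {n : ℕ}
    (hfd : FiniteDimensional ℂ (LinearMap.range G.toLinearMap))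
    (hrk : Module.finrank ℂ (LinearMap.range G.toLinearMap) < n) :
    approxNum T n ≤ ‖T - G‖ :=
  csInf_le (aux_set_bddBelow T n) ⟨G, hfd, hrk, rfl⟩

lemma approxNum_anti (T : H →L[ℂ] H) {a b : ℕ} (ha : 0 < a) (hab : a ≤ b) :
    approxNum T b ≤ approxNum T a := by
  apply csInf_le_csInf (aux_set_bddBelow T b) (aux_set_nonempty T ha)
  rintro c ⟨F, h1, h2, rfl⟩
  exact ⟨F, h1, lt_of_lt_of_le h2 hab, rfl⟩

-- finite rank implies compact
lemma aux_compact (F : H →L[ℂ] H)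
    (hfd : FiniteDimensional ℂ (LinearMap.range F.toLinearMap)) : IsCompactOperator F := by
  haveI := hfd
  haveI : ProperSpace (LinearMap.range F.toLinearMap) := FiniteDimensional.proper ℂ _
  set V := LinearMap.range F.toLinearMap
  refine ⟨(Subtype.val : V → H) '' Metric.closedBall 0 ‖F‖, ?_, ?_⟩
  · exact (isCompact_closedBall _ _).image continuous_subtype_val
  · apply Filter.mem_of_superset (Metric.closedBall_mem_nhds (0:H) one_pos)
    intro x hx
    refine ⟨⟨F x, LinearMap.mem_range_self _ x⟩, ?_, rfl⟩
    simp only [Metric.mem_closedBall, dist_zero_right]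
    calc ‖(⟨F x, _⟩ : V)‖ = ‖F x‖ := rfl
      _ ≤ ‖F‖ * ‖x‖ := F.le_opNorm x
      _ ≤ ‖F‖ * 1 := by
          refine mul_le_mul_of_nonneg_left ?_ (norm_nonneg F)
          simpa [dist_zero_right] using hx
      _ = ‖F‖ := mul_one _

lemma one_le_approxNum (T : H →L[ℂ] H) (he : essNorm T = 1) {n : ℕ} (hn : 0 < n) :
    1 ≤ approxNum T n := by
  apply le_csInf (aux_set_nonempty T hn)
  rintro c ⟨F, hfd, _, rfl⟩
  rw [← he]
  apply csInf_le ⟨0, by rintro c ⟨L, _, rfl⟩; exact norm_nonneg _⟩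
  exact ⟨F, aux_compact F hfd, rfl⟩


lemma aux_norm_le (S : H →L[ℂ] H) (hsa : ContinuousLinearMap.adjoint S = S)
    {t : ℝ} (ht : 0 ≤ t)
    (hpos : ∀ x : H, 0 ≤ Complex.re ⟪S x, x⟫_ℂ)
    (hub : ∀ x : H, Complex.re ⟪S x, x⟫_ℂ ≤ t * ‖x‖ ^ 2) : ‖S‖ ≤ t := by
  refine S.opNorm_le_bound ht fun x => ?_
  rcases eq_or_ne (S x) 0 with h0 | h0
  · rw [h0, norm_zero]; positivity
  have hun : 0 < ‖S x‖ := norm_pos_iff.mpr h0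
  have hxn : 0 < ‖x‖ := by
    rcases eq_or_ne x 0 with rfl | hx
    · simp at h0
    · exact norm_pos_iff.mpr hx
  set u := S x with hu
  set r : ℝ := ‖x‖ / ‖u‖ with hr
  have hSux : Complex.re ⟪S u, x⟫_ℂ = ‖u‖ ^ 2 := by
    have h1 : ⟪S u, x⟫_ℂ = ⟪u, S x⟫_ℂ := by
      conv_lhs => rw [← hsa]
      exact ContinuousLinearMap.adjoint_inner_left S x u
    rw [h1, ← hu, ← inner_self_eq_norm_sq (𝕜 := ℂ)]; rfl
  have hSxu : Complex.re ⟪S x, u⟫_ℂ = ‖u‖ ^ 2 := by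
    rw [← hu, ← inner_self_eq_norm_sq (𝕜 := ℂ)]; rfl
  have hexp : ⟪S (x - (r:ℂ) • u), x - (r:ℂ) • u⟫_ℂ
      = ⟪S x, x⟫_ℂ - (r:ℂ) * ⟪S x, u⟫_ℂ - (r:ℂ) * ⟪S u, x⟫_ℂ
        + ((r:ℂ))^2 * ⟪S u, u⟫_ℂ := by
    simp only [map_sub, map_smul, inner_sub_left, inner_sub_right, inner_smul_left,
      inner_smul_right, Complex.conj_ofReal]
    ring
  have hkey := hpos (x - (r:ℂ) • u)
  rw [hexp] at hkey
  simp only [Complex.add_re, Complex.sub_re, ← Complex.ofReal_pow,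
    Complex.re_ofReal_mul] at hkey
  rw [hSxu, hSux] at hkey
  have hru : r * ‖u‖ ^ 2 = ‖x‖ * ‖u‖ := by rw [hr]; field_simp
  have hr2 : r ^ 2 * ‖u‖ ^ 2 = ‖x‖ ^ 2 := by rw [hr]; field_simp
  have h2 : r ^ 2 * Complex.re ⟪S u, u⟫_ℂ ≤ r ^ 2 * (t * ‖u‖ ^ 2) :=
    mul_le_mul_of_nonneg_left (hub u) (sq_nonneg r)
  have h3 : r ^ 2 * (t * ‖u‖ ^ 2) = t * ‖x‖ ^ 2 := by rw [← hr2]; ring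
  have h4 := hub x
  nlinarith [hxn, hun]


lemma aux_re_le (z : ℂ) : z.re ≤ ‖z‖ := by
  exact Complex.re_le_norm z

lemma aux_proj_norm_le (P : H →L[ℂ] H) (hPsa : ContinuousLinearMap.adjoint P = P)
    (hPidem : P ∘L P = P) (x : H) : ‖P x‖ ≤ ‖x‖ := by
  rcases eq_or_ne (P x) 0 with h0 | h0
  · rw [h0, norm_zero]; exact norm_nonneg x
  have hPP : P (P x) = P x := DFunLike.congr_fun hPidem x
  have h1 : ⟪P x, P x⟫_ℂ = ⟪x, P x⟫_ℂ := by
    calc ⟪P x, P x⟫_ℂ = ⟪(ContinuousLinearMap.adjoint P) x, P x⟫_ℂ := by rw [hPsa]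
      _ = ⟪x, P (P x)⟫_ℂ := ContinuousLinearMap.adjoint_inner_left P (P x) x
      _ = ⟪x, P x⟫_ℂ := by rw [hPP]
  have h2 : ‖P x‖ ^ 2 = Complex.re ⟪x, P x⟫_ℂ := by
    rw [← h1]; exact (inner_self_eq_norm_sq (𝕜 := ℂ) _).symm
  have h3 : Complex.re ⟪x, P x⟫_ℂ ≤ ‖x‖ * ‖P x‖ :=
    le_trans (aux_re_le _) (norm_inner_le_norm _ _)
  have h4 : 0 < ‖P x‖ := norm_pos_iff.mpr h0
  nlinarith

lemma exists_approx (T : H →L[ℂ] H) {n : ℕ} (hn : 0 < n) {b : ℝ} (hb : approxNum T n < b) :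
    ∃ F : H →L[ℂ] H, FiniteDimensional ℂ (LinearMap.range F.toLinearMap) ∧
      Module.finrank ℂ (LinearMap.range F.toLinearMap) < n ∧ ‖T - F‖ < b := by
  obtain ⟨c, ⟨F, h1, h2, rfl⟩, hcb⟩ := exists_lt_of_csInf_lt (aux_set_nonempty T hn) hb
  exact ⟨F, h1, h2, hcb⟩

lemma essNorm_le (T L : H →L[ℂ] H) (hL : IsCompactOperator L) : essNorm T ≤ ‖T - L‖ := by
  apply csInf_le ⟨0, by rintro c ⟨M, _, rfl⟩; exact norm_nonneg _⟩
  exact ⟨L, hL, rfl⟩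

lemma aux_move (P : H →L[ℂ] H) (hPsa : ContinuousLinearMap.adjoint P = P) (a b : H) :
    ⟪P a, b⟫_ℂ = ⟪a, P b⟫_ℂ := by
  calc ⟪P a, b⟫_ℂ = ⟪(ContinuousLinearMap.adjoint P) a, b⟫_ℂ := by rw [hPsa]
    _ = ⟪a, P b⟫_ℂ := ContinuousLinearMap.adjoint_inner_left P b a

set_option maxHeartbeats 1000000 in
lemma key_lemma (T : H →L[ℂ] H) (hT : T.IsPositive) (he : essNorm T = 1)
    (P : H →L[ℂ] H) (hPsa : ContinuousLinearMap.adjoint P = P) (hPidem : P ∘L P = P)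
    (hPT : T ∘L P = P ∘L T)
    (hPrange : ∀ x : H, P x = x → ‖x‖ ^ 2 ≤ Complex.re ⟪T x, x⟫_ℂ)
    (k : ℕ) :
    approxNum (T ∘L P - P) (2*k+1) ≤ approxNum T (k+1) - 1 := by
  set X : H →L[ℂ] H := T ∘L P - P with hX
  have hTsa : ContinuousLinearMap.adjoint T = T := hT.isSelfAdjoint.adjoint_eq
  have hPapp : ∀ y : H, P (P y) = P y := fun y => DFunLike.congr_fun hPidem y
  have hPTapp : ∀ y : H, T (P y) = P (T y) := fun y => DFunLike.congr_fun hPT y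
  have hXapp : ∀ y : H, X y = T (P y) - P y := fun y => rfl
  have hXsa : ContinuousLinearMap.adjoint X = X := by
    rw [hX, map_sub, ContinuousLinearMap.adjoint_comp, hPsa, hTsa, ← hPT]
  have hTPfix : ∀ y : H, P (T (P y)) = T (P y) := by
    intro y
    rw [← hPTapp (P y), hPapp]
  have hXform : ∀ y : H, Complex.re ⟪X y, y⟫_ℂ
      = Complex.re ⟪T (P y), P y⟫_ℂ - ‖P y‖ ^ 2 := by
    intro y
    rw [hXapp, inner_sub_left]
    have e1 : ⟪T (P y), y⟫_ℂ = ⟪T (P y), P y⟫_ℂ := by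
      calc ⟪T (P y), y⟫_ℂ = ⟪P (T (P y)), y⟫_ℂ := by rw [hTPfix]
        _ = ⟪T (P y), P y⟫_ℂ := by rw [aux_move P hPsa]
    have e2 : Complex.re ⟪P y, y⟫_ℂ = ‖P y‖ ^ 2 := by
      rw [show ⟪P y, y⟫_ℂ = ⟪P y, P y⟫_ℂ by
        conv_lhs => rw [← hPapp y]
        rw [aux_move P hPsa]]
      exact inner_self_eq_norm_sq (𝕜 := ℂ) _
    rw [Complex.sub_re, e1, e2]
  have hXpos : ∀ y : H, 0 ≤ Complex.re ⟪X y, y⟫_ℂ := by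
    intro y
    rw [hXform]
    have := hPrange (P y) (hPapp y)
    linarith
  refine le_of_forall_sub_le fun ε hε => ?_
  rw [sub_le_iff_le_add]
  have hlt : approxNum T (k+1) < approxNum T (k+1) + ε := lt_add_of_pos_right _ hε
  obtain ⟨F, hFfd, hFrk, hFc⟩ := exists_approx T (Nat.succ_pos k) hlt
  haveI := hFfd
  have hc1 : (1:ℝ) ≤ ‖T - F‖ := he ▸ essNorm_le T F (aux_compact F hFfd)
  -- the finite-dimensional subspace
  set V : Submodule ℂ H := Submodule.map P.toLinearMap (LinearMap.range F.toLinearMap) with hV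
  haveI hVfd : FiniteDimensional ℂ V := Module.Finite.map _ _
  have hVrk : Module.finrank ℂ V ≤ k :=
    le_trans (Submodule.finrank_map_le _ _) (Nat.lt_succ_iff.mp hFrk)
  set R : H →L[ℂ] H := V.subtypeL ∘L V.orthogonalProjectionOnto with hR
  have hRsa : ContinuousLinearMap.adjoint R = R := (isSelfAdjoint_starProjection V).adjoint_eq
  have hRmem : ∀ y : H, R y ∈ V := fun y => (V.orthogonalProjectionOnto y).2
  have hRfix : ∀ v : H, v ∈ V → R v = v := fun v hv => Submodule.starProjection_eq_self_iff.mpr hv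
  have hRR : ∀ w : H, R (R w) = R w := fun w => hRfix _ (hRmem w)
  have horth : ∀ y : H, ∀ w ∈ V, ⟪y - R y, w⟫_ℂ = 0 := fun y w hw => Submodule.starProjection_inner_eq_zero y w hw
  set G : H →L[ℂ] H := R ∘L X + X ∘L R - R ∘L (X ∘L R) with hG
  have hXG : X - G = (1 - R) ∘L (X ∘L (1 - R)) := by
    rw [hG]
    simp only [← ContinuousLinearMap.mul_def]
    noncomm_ring
  have hone : ContinuousLinearMap.adjoint (1 - R) = 1 - R := by
    rw [map_sub, hRsa]
    congr 1
    rw [ContinuousLinearMap.one_def, ContinuousLinearMap.adjoint_id]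
  have hmoveR : ∀ a b : H, ⟪(1 - R) a, b⟫_ℂ = ⟪a, (1 - R) b⟫_ℂ := aux_move _ hone
  have happ : ∀ y : H, ((1 - R) ∘L (X ∘L (1 - R))) y = (1-R) (X ((1-R) y)) := fun y => rfl
  have hform : ∀ y : H, Complex.re ⟪((1 - R) ∘L (X ∘L (1 - R))) y, y⟫_ℂ
      = Complex.re ⟪X ((1-R) y), (1-R) y⟫_ℂ := by
    intro y
    rw [happ, hmoveR]
  have hnorm : ‖X - G‖ ≤ ‖T - F‖ - 1 := by
    rw [hXG]
    apply aux_norm_le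
    · rw [ContinuousLinearMap.adjoint_comp, ContinuousLinearMap.adjoint_comp, hone, hXsa,
        ContinuousLinearMap.comp_assoc]
    · linarith
    · intro y
      rw [hform]
      exact hXpos _
    · intro y
      rw [hform]
      set z : H := (1 - R) y with hz
      have hzy : z = y - R y := by rw [hz]; rfl
      set m : H := P z with hm
      have h1 : Complex.re ⟪X z, z⟫_ℂ = Complex.re ⟪T m, m⟫_ℂ - ‖m‖ ^ 2 := hXform z
      have hF0 : ⟪F m, m⟫_ℂ = 0 := by
        have hmem : P (F m) ∈ V := ⟨F m, LinearMap.mem_range_self _ m, rfl⟩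
        calc ⟪F m, m⟫_ℂ = ⟪F m, P z⟫_ℂ := by rw [hm]
          _ = ⟪P (F m), z⟫_ℂ := (aux_move P hPsa (F m) z).symm
          _ = (starRingEnd ℂ) ⟪z, P (F m)⟫_ℂ := by rw [inner_conj_symm]
          _ = 0 := by rw [hzy, horth y _ hmem, map_zero]
      have h2 : Complex.re ⟪T m, m⟫_ℂ = Complex.re ⟪(T - F) m, m⟫_ℂ := by
        rw [ContinuousLinearMap.sub_apply, inner_sub_left, hF0, sub_zero]
      have h3 : Complex.re ⟪(T - F) m, m⟫_ℂ ≤ ‖T - F‖ * ‖m‖ ^ 2 := by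
        have ha := aux_re_le ⟪(T - F) m, m⟫_ℂ
        have hb := norm_inner_le_norm (𝕜 := ℂ) ((T - F) m) m
        have hc := (T - F).le_opNorm m
        nlinarith [norm_nonneg m, norm_nonneg ((T - F) m)]
      have hm_le : ‖m‖ ≤ ‖y‖ := by
        have h4 : ‖m‖ ≤ ‖z‖ := aux_proj_norm_le P hPsa hPidem z
        have h5 : (1 - R) ∘L (1 - R) = 1 - R := by
          ext w
          simp only [ContinuousLinearMap.comp_apply, ContinuousLinearMap.sub_apply,
            ContinuousLinearMap.one_apply, map_sub]
          rw [hRR w]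
          abel
        have h6 : ‖z‖ ≤ ‖y‖ := by
          rw [hz]; exact aux_proj_norm_le (1 - R) hone h5 y
        linarith
      have h7 : ‖m‖ ^ 2 ≤ ‖y‖ ^ 2 := by nlinarith [norm_nonneg m, norm_nonneg y]
      nlinarith [h7, mul_nonneg (sub_nonneg.mpr hc1) (sub_nonneg.mpr h7)]
  -- rank bound
  set W : Submodule ℂ H := V ⊔ Submodule.map X.toLinearMap V with hW
  haveI : FiniteDimensional ℂ (Submodule.map X.toLinearMap V) := Module.Finite.map _ _
  haveI hWfd : FiniteDimensional ℂ W := Submodule.finiteDimensional_sup _ _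
  have hGW : LinearMap.range G.toLinearMap ≤ W := by
    rintro w ⟨y, rfl⟩
    have e : G y = (R (X y) - R (X (R y))) + X (R y) := by
      simp only [hG, ContinuousLinearMap.coe_coe, ContinuousLinearMap.sub_apply,
        ContinuousLinearMap.add_apply, ContinuousLinearMap.comp_apply]
      abel
    show G.toLinearMap y ∈ W
    rw [ContinuousLinearMap.coe_coe, e]
    exact add_mem (Submodule.mem_sup_left (sub_mem (hRmem _) (hRmem _)))
      (Submodule.mem_sup_right ⟨R y, hRmem y, rfl⟩)
  haveI : FiniteDimensional ℂ (LinearMap.range G.toLinearMap) :=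
    Submodule.finiteDimensional_of_le hGW
  have hGrk : Module.finrank ℂ (LinearMap.range G.toLinearMap) < 2*k+1 := by
    have h7 : Module.finrank ℂ (LinearMap.range G.toLinearMap) ≤ Module.finrank ℂ W :=
      Submodule.finrank_mono hGW
    have h8 : Module.finrank ℂ W ≤ Module.finrank ℂ V
        + Module.finrank ℂ (Submodule.map X.toLinearMap V) :=
      Submodule.finrank_add_le_finrank_add_finrank _ _
    have h9 : Module.finrank ℂ (Submodule.map X.toLinearMap V) ≤ Module.finrank ℂ V :=
      Submodule.finrank_map_le _ _
    omega
  have hfin := approxNum_le X G ‹_› hGrk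
  have : ‖X - G‖ ≤ approxNum T (k+1) + ε - 1 := by linarith
  linarith

lemma sum_le_prod_aux (s : Finset ℕ) (f : ℕ → ℝ) (hf : ∀ i ∈ s, 1 ≤ f i) :
    1 ≤ ∏ i ∈ s, f i ∧ ∑ i ∈ s, (f i - 1) ≤ ∏ i ∈ s, f i - 1 := by
  classical
  induction s using Finset.induction_on with
  | empty => simp
  | insert a s' hnotmem ih =>
    rw [Finset.sum_insert hnotmem, Finset.prod_insert hnotmem]
    have h1 : 1 ≤ f a := hf a (Finset.mem_insert_self a s')
    obtain ⟨h3, h2⟩ := ih fun i hi => hf i (Finset.mem_insert_of_mem hi)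
    constructor
    · nlinarith
    · nlinarith

lemma double_sum_aux (g : ℕ → ℝ) (N : ℕ) :
    ∑ m ∈ Finset.range (2*N), g (m/2) = 2 * ∑ k ∈ Finset.range N, g k := by
  induction N with
  | zero => simp
  | succ n ih =>
    rw [show 2*(n+1) = 2*n+1+1 by ring, Finset.sum_range_succ, Finset.sum_range_succ, ih,
      Finset.sum_range_succ, show (2*n+1)/2 = n by omega, show (2*n)/2 = n by omega]
    ring

end AuxStmt5

set_option maxHeartbeats 1000000 in
/-- Let `T ≥ 0` with `‖T‖ₑ = 1` and `∏ₙ max(1, sₙ(T)) < ∞`, and let `P` be the spectral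
projection of `T` for `(1, ∞)`.  Then `T = (T(1-P) + P) + (T-1)P`, where `T(1-P) + P` is a
contraction and `(T-1)P` is trace class. -/
theorem stmt5 {H : Type*} [NormedAddCommGroup H] [InnerProductSpace ℂ H] [CompleteSpace H]
    (T : H →L[ℂ] H) (hT : T.IsPositive) (he : essNorm T = 1)
    (hprod : ∃ C : ℝ, ∀ N : ℕ, ∏ n ∈ Finset.Icc 1 N, max 1 (approxNum T n) ≤ C)
    (P : H →L[ℂ] H) (hPsa : ContinuousLinearMap.adjoint P = P) (hPidem : P ∘L P = P)
    (hPT : T ∘L P = P ∘L T)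
    (hPrange : ∀ x : H, P x = x → ‖x‖ ^ 2 ≤ Complex.re ⟪T x, x⟫_ℂ)
    (hPker : ∀ x : H, P x = 0 → Complex.re ⟪T x, x⟫_ℂ ≤ ‖x‖ ^ 2) :
    T = (T ∘L (1 - P) + P) + (T ∘L P - P) ∧
      ‖T ∘L (1 - P) + P‖ ≤ 1 ∧ IsTraceClassOp (T ∘L P - P) := by
  have hTsa : ContinuousLinearMap.adjoint T = T := hT.isSelfAdjoint.adjoint_eq
  have hPapp : ∀ y : H, P (P y) = P y := fun y => DFunLike.congr_fun hPidem y
  have hPTapp : ∀ y : H, T (P y) = P (T y) := fun y => DFunLike.congr_fun hPT y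
  have hQsa : ContinuousLinearMap.adjoint (1 - P) = 1 - P := by
    rw [map_sub, hPsa]
    congr 1
    rw [ContinuousLinearMap.one_def, ContinuousLinearMap.adjoint_id]
  have hQapp : ∀ y : H, (1 - P) y = y - P y := fun y => rfl
  have hQP0 : ∀ y : H, P ((1 - P) y) = 0 := by
    intro y
    rw [hQapp, map_sub, hPapp, sub_self]
  have hQidem : (1 - P) ∘L (1 - P) = 1 - P := by
    ext w
    show (1 - P) ((1 - P) w) = (1 - P) w
    rw [hQapp ((1-P) w), hQP0, sub_zero]
  refine ⟨?_, ?_, ?_⟩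
  · -- decomposition
    simp only [← ContinuousLinearMap.mul_def]
    noncomm_ring
  · -- contraction
    set S₁ : H →L[ℂ] H := (1 - P) ∘L (T ∘L (1 - P)) with hS₁
    have hmoveQ : ∀ a b : H, ⟪(1 - P) a, b⟫_ℂ = ⟪a, (1 - P) b⟫_ℂ := aux_move _ hQsa
    have hS₁norm : ‖S₁‖ ≤ 1 := by
      apply aux_norm_le
      · rw [hS₁, ContinuousLinearMap.adjoint_comp, ContinuousLinearMap.adjoint_comp, hQsa, hTsa,
          ContinuousLinearMap.comp_assoc]
      · exact zero_le_one
      · intro y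
        have : ⟪S₁ y, y⟫_ℂ = ⟪T ((1 - P) y), (1 - P) y⟫_ℂ := by
          rw [hS₁]
          exact hmoveQ (T ((1 - P) y)) y
        rw [this]
        exact hT.re_inner_nonneg_left _
      · intro y
        have h1 : ⟪S₁ y, y⟫_ℂ = ⟪T ((1 - P) y), (1 - P) y⟫_ℂ := by
          rw [hS₁]
          exact hmoveQ (T ((1 - P) y)) y
        rw [h1, one_mul]
        have h2 := hPker ((1 - P) y) (hQP0 y)
        have h3 : ‖(1 - P) y‖ ≤ ‖y‖ := aux_proj_norm_le (1 - P) hQsa hQidem y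
        nlinarith [norm_nonneg ((1 - P) y), norm_nonneg y]
    refine ContinuousLinearMap.opNorm_le_bound _ zero_le_one fun x => ?_
    rw [one_mul]
    set u : H := T ((1 - P) x) with hu
    have hax : ((T ∘L (1 - P) + P : H →L[ℂ] H)) x = u + P x := by
      rw [ContinuousLinearMap.add_apply, ContinuousLinearMap.comp_apply]
    have hu0 : P u = 0 := by
      rw [hu, hQapp, map_sub, map_sub, ← hPTapp, ← hPTapp, hPapp, sub_self]
    have huS : u = S₁ ((1 - P) x) := by
      have e1 : (1 - P) ((1 - P) x) = (1 - P) x := DFunLike.congr_fun hQidem x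
      have e2 : S₁ ((1 - P) x) = (1 - P) (T ((1 - P) ((1 - P) x))) := rfl
      rw [e2, e1, hQapp (T ((1-P) x)), ← hu, hu0, sub_zero, hu]
    have hun : ‖u‖ ≤ ‖(1 - P) x‖ := by
      rw [huS]
      calc ‖S₁ ((1 - P) x)‖ ≤ ‖S₁‖ * ‖(1 - P) x‖ := S₁.le_opNorm _
        _ ≤ 1 * ‖(1 - P) x‖ := by
            exact mul_le_mul_of_nonneg_right hS₁norm (norm_nonneg _)
        _ = ‖(1 - P) x‖ := one_mul _
    have horthu : ⟪u, P x⟫_ℂ = 0 := by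
      calc ⟪u, P x⟫_ℂ = ⟪u, P (P x)⟫_ℂ := by rw [hPapp]
        _ = ⟪P u, P x⟫_ℂ := (aux_move P hPsa u (P x)).symm
        _ = 0 := by rw [hu0, inner_zero_left]
    have horthq : ⟪(1 - P) x, P x⟫_ℂ = 0 := by
      calc ⟪(1 - P) x, P x⟫_ℂ = ⟪(1 - P) x, P (P x)⟫_ℂ := by rw [hPapp]
        _ = ⟪P ((1 - P) x), P x⟫_ℂ := (aux_move P hPsa _ (P x)).symm
        _ = 0 := by rw [hQP0, inner_zero_left]
    have hpyth1 : ‖u + P x‖ * ‖u + P x‖ = ‖u‖ * ‖u‖ + ‖P x‖ * ‖P x‖ :=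
      norm_add_sq_eq_norm_sq_add_norm_sq_of_inner_eq_zero u (P x) horthu
    have hpyth2 : ‖x‖ * ‖x‖ = ‖(1 - P) x‖ * ‖(1 - P) x‖ + ‖P x‖ * ‖P x‖ := by
      have e : (1 - P) x + P x = x := by rw [hQapp]; abel
      conv_lhs => rw [← e]
      exact norm_add_sq_eq_norm_sq_add_norm_sq_of_inner_eq_zero _ _ horthq
    rw [hax]
    have h5 : ‖u + P x‖ * ‖u + P x‖ ≤ ‖x‖ * ‖x‖ := by
      nlinarith [norm_nonneg u, norm_nonneg ((1 - P) x)]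
    nlinarith [norm_nonneg (u + P x), norm_nonneg x]
  · -- trace class
    show Summable fun n : ℕ => approxNum (T ∘L P - P) (n + 1)
    obtain ⟨C, hC⟩ := hprod
    set X : H →L[ℂ] H := T ∘L P - P with hX
    set g : ℕ → ℝ := fun k => approxNum T (k+1) - 1 with hg
    have hg0 : ∀ k, 0 ≤ g k := fun k => sub_nonneg.mpr (one_le_approxNum T he k.succ_pos)
    have hgB : ∀ N, ∑ k ∈ Finset.range N, g k ≤ C - 1 := by
      intro N
      obtain ⟨-, h1⟩ := sum_le_prod_aux (Finset.Icc 1 N)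
        (fun n => max 1 (approxNum T n)) (fun i _ => le_max_left _ _)
      have h2 : ∑ k ∈ Finset.range N, g k
          = ∑ n ∈ Finset.Icc 1 N, (max 1 (approxNum T n) - 1) := by
        rw [← Finset.Ico_add_one_right_eq_Icc, Finset.sum_Ico_eq_sum_range]
        simp only [Nat.add_sub_cancel]
        apply Finset.sum_congr rfl
        intro i _
        rw [max_eq_right (one_le_approxNum T he (by omega)), hg]
        simp [Nat.add_comm]
      rw [h2]
      exact le_trans h1 (by linarith [hC N])
    have hkey : ∀ k, approxNum X (2*k+1) ≤ g k :=
      fun k => key_lemma T hT he P hPsa hPidem hPT hPrange k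
    have hfg : ∀ m, approxNum X (m+1) ≤ g (m/2) := by
      intro m
      refine le_trans (approxNum_anti X (by omega) (by omega : 2*(m/2)+1 ≤ m+1)) (hkey (m/2))
    apply summable_of_sum_range_le (c := 2*(C-1)) (fun n => approxNum_nonneg _ _)
    intro N
    calc ∑ m ∈ Finset.range N, approxNum X (m+1)
        ≤ ∑ m ∈ Finset.range N, g (m/2) := Finset.sum_le_sum fun m _ => hfg m
      _ ≤ ∑ m ∈ Finset.range (2*N), g (m/2) := by
          apply Finset.sum_le_sum_of_subset_of_nonneg
          · exact Finset.range_subset_range.mpr (by omega)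
          · exact fun i _ _ => hg0 _
      _ = 2 * ∑ k ∈ Finset.range N, g k := double_sum_aux g N
      _ ≤ 2*(C-1) := by linarith [hgB N]
end
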